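/- Let G be a connected graph with no isolated vertices, r a positive integer, and f a real polynomial. If 𝓛^r = f(Q), or Q^r = f(𝓛), or 𝓛^r = f(L), or L^r = f(𝓛), then G is regular. -/

import Mathlib

open Matrix Polynomial Finset SimpleGraph

section Aux

variable {n : Type*} [Fintype n] [DecidableEq n]

omit [DecidableEq n] in
lemma sq_mulVec_zero {M : Matrix n n ℝ} (hM : Mᵀ = M) {x : n → ℝ}
    (h : (M * M) *ᵥ x = 0) : M *ᵥ x = 0 := by
  have h0 : (M *ᵥ x) ⬝ᵥ (M *ᵥ x) = 0 := by
    calc (M *ᵥ x) ⬝ᵥ (M *ᵥ x) = ((M *ᵥ x) ᵥ* M) ⬝ᵥ x := by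
          rw [Matrix.dotProduct_mulVec]
      _ = (Mᵀ *ᵥ (M *ᵥ x)) ⬝ᵥ x := by rw [Matrix.mulVec_transpose]
      _ = ((M * M) *ᵥ x) ⬝ᵥ x := by rw [hM, Matrix.mulVec_mulVec]
      _ = 0 := by rw [h, zero_dotProduct]
  exact dotProduct_self_eq_zero.mp h0

lemma pow_mulVec_zero_down {M : Matrix n n ℝ} (hM : Mᵀ = M) {x : n → ℝ} :
    ∀ r : ℕ, M ^ (r + 1) *ᵥ x = 0 → M *ᵥ x = 0 := by
  intro r
  induction r with
  | zero => intro h; simpa using h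
  | succ r ih =>
    intro h
    apply ih
    have hsym : (M ^ (r + 1))ᵀ = M ^ (r + 1) := by rw [Matrix.transpose_pow, hM]
    apply sq_mulVec_zero hsym
    have h2 : M ^ (r + 1) * M ^ (r + 1) = M ^ r * M ^ (r + 1 + 1) := by
      rw [← pow_add, ← pow_add]; congr 1; omega
    rw [h2, ← Matrix.mulVec_mulVec, h, Matrix.mulVec_zero]

lemma pow_mulVec_zero_up {M : Matrix n n ℝ} {x : n → ℝ} (h : M *ᵥ x = 0) {r : ℕ} (hr : 0 < r) :
    M ^ r *ᵥ x = 0 := by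
  obtain ⟨k, rfl⟩ := Nat.exists_eq_add_of_lt hr
  rw [zero_add, pow_succ, ← Matrix.mulVec_mulVec, h, Matrix.mulVec_zero]

lemma aeval_mulVec_of_mulVec_zero {M : Matrix n n ℝ} {x : n → ℝ} (h : M *ᵥ x = 0)
    (f : Polynomial ℝ) : (Polynomial.aeval M f) *ᵥ x = f.coeff 0 • x := by
  conv_lhs => rw [← Polynomial.divX_mul_X_add f]
  rw [map_add, _root_.map_mul, Polynomial.aeval_X, Matrix.add_mulVec, ← Matrix.mulVec_mulVec, h,
    Matrix.mulVec_zero, Polynomial.aeval_C, Algebra.algebraMap_eq_smul_one,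
    Matrix.smul_mulVec, Matrix.one_mulVec, zero_add]

lemma conj_pow_aux {U B : Matrix n n ℝ} (hU1 : U * star U = 1) (hU2 : star U * U = 1) :
    ∀ r : ℕ, (U * B * star U) ^ r = U * B ^ r * star U
  | 0 => by simp [hU1]
  | (r + 1) => by
    rw [pow_succ, conj_pow_aux hU1 hU2 r, pow_succ]
    calc U * B ^ r * star U * (U * B * star U)
        = U * B ^ r * (star U * U) * B * star U := by simp only [mul_assoc]
      _ = U * (B ^ r * B) * star U := by rw [hU2, mul_one]; simp only [mul_assoc]

lemma commute_of_commute_pow {M C : Matrix n n ℝ} (hM : M.PosSemidef) {r : ℕ} (hr : 0 < r)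
    (h : C * M ^ r = M ^ r * C) : C * M = M * C := by
  have hH := hM.isHermitian
  set U : Matrix n n ℝ := ↑hH.eigenvectorUnitary with hUdef
  set ev : n → ℝ := hH.eigenvalues with hevdef
  have hU2 : star U * U = 1 :=
    Matrix.mem_unitaryGroup_iff'.mp hH.eigenvectorUnitary.2
  have hU1 : U * star U = 1 :=
    Matrix.mem_unitaryGroup_iff.mp hH.eigenvectorUnitary.2
  have hU1' : ∀ X : Matrix n n ℝ, U * (star U * X) = X := fun X => by
    rw [← mul_assoc, hU1, one_mul]
  have hU2' : ∀ X : Matrix n n ℝ, star U * (U * X) = X := fun X => by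
    rw [← mul_assoc, hU2, one_mul]
  have hspec : M = U * diagonal ev * star U := by
    have := hH.spectral_theorem
    rw [RCLike.ofReal_real_eq_id] at this
    simpa using this
  have hpow : M ^ r = U * diagonal (fun i => ev i ^ r) * star U := by
    rw [hspec, conj_pow_aux hU1 hU2, Matrix.diagonal_pow]
    rfl
  set C' : Matrix n n ℝ := star U * C * U with hC'
  have key : ∀ X Y : Matrix n n ℝ, (star U * X * U) * (star U * Y * U) = star U * (X * Y) * U := by
    intro X Y; simp only [mul_assoc, hU1', hU2']
  have hDr : diagonal (fun i => ev i ^ r) = star U * M ^ r * U := by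
    rw [hpow]; simp only [mul_assoc, hU2', hU2, mul_one]
  have hcomm' : C' * diagonal (fun i => ev i ^ r) = diagonal (fun i => ev i ^ r) * C' := by
    calc C' * diagonal (fun i => ev i ^ r) = star U * (C * M ^ r) * U := by rw [hC', hDr, key]
      _ = star U * (M ^ r * C) * U := by rw [h]
      _ = diagonal (fun i => ev i ^ r) * C' := by rw [hC', hDr, key]
  have hev : ∀ i, 0 ≤ ev i := hM.eigenvalues_nonneg
  have key2 : C' * diagonal ev = diagonal ev * C' := by
    ext i j
    have h1 : (C' * diagonal (fun i => ev i ^ r)) i j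
        = (diagonal (fun i => ev i ^ r) * C') i j := by rw [hcomm']
    rw [Matrix.mul_diagonal, Matrix.diagonal_mul] at h1
    rw [Matrix.mul_diagonal, Matrix.diagonal_mul]
    rcases eq_or_ne (ev i) (ev j) with he | he
    · rw [he, mul_comm]
    · have hne : ev i ^ r ≠ ev j ^ r := fun hc =>
        he ((pow_left_strictMonoOn₀ hr.ne').injOn (hev i) (hev j) hc)
      have hzero : C' i j = 0 := by
        rcases mul_eq_zero.mp (show C' i j * (ev j ^ r - ev i ^ r) = 0 by
          rw [mul_sub, h1]; ring) with h' | h'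
        · exact h'
        · exact absurd (by linarith [sub_eq_zero.mp h'] : ev i ^ r = ev j ^ r) hne
      rw [hzero, mul_zero, zero_mul]
  have hCeq : C = U * C' * star U := by
    rw [hC']; simp only [mul_assoc, hU1', hU1, mul_one]
  have key' : ∀ X Y : Matrix n n ℝ, (U * X * star U) * (U * Y * star U) = U * (X * Y) * star U := by
    intro X Y; simp only [mul_assoc, hU1', hU2']
  calc C * M = (U * C' * star U) * (U * diagonal ev * star U) := by rw [← hCeq, ← hspec]
    _ = U * (C' * diagonal ev) * star U := key' _ _
    _ = U * (diagonal ev * C') * star U := by rw [key2]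
    _ = (U * diagonal ev * star U) * (U * C' * star U) := (key' _ _).symm
    _ = M * C := by rw [← hCeq, ← hspec]

variable {V : Type*} [Fintype V] [DecidableEq V] (G : SimpleGraph V) [DecidableRel G.Adj]


lemma signless_quadform (x : V → ℝ) :
    x ⬝ᵥ ((G.degMatrix ℝ + G.adjMatrix ℝ) *ᵥ x) =
    (∑ i : V, ∑ j : V, if G.Adj i j then (x i + x j)^2 else 0) / 2 := by
  simp_rw [add_mulVec, dotProduct_add, dotProduct_mulVec_degMatrix,
    dotProduct_mulVec_adjMatrix, ← sum_add_distrib, degree_eq_sum_if_adj, sum_mul, ite_mul, one_mul,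
    zero_mul, ← sum_add_distrib, ite_add_ite, add_zero]
  rw [← add_self_div_two (∑ x_1 : V, ∑ x_2 : V, _)]
  conv_lhs => enter [1,2,2,i,2,j]; rw [if_congr (adj_comm G i j) rfl rfl]
  conv_lhs => enter [1,2]; rw [Finset.sum_comm]
  simp_rw [← sum_add_distrib, ite_add_ite]
  congr 2 with i
  congr 2 with j
  ring_nf

lemma posSemidef_signless : PosSemidef (G.degMatrix ℝ + G.adjMatrix ℝ) := by
  rw [posSemidef_iff_dotProduct_mulVec]
  constructor
  · rw [IsHermitian, conjTranspose_eq_transpose_of_trivial]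
    exact (G.isSymm_degMatrix ℝ).add (isSymm_adjMatrix G)
  · intro x
    rw [star_trivial, signless_quadform]
    positivity


lemma degree_eq_of_adj_of_commute (hdeg : ∀ w : V, 0 < G.degree w)
    {Di : Matrix V V ℝ}
    (hDi : Di = Matrix.diagonal (fun w => (Real.sqrt (G.degree w))⁻¹))
    (hcomm : (G.degMatrix ℝ + G.adjMatrix ℝ) * (Di * G.lapMatrix ℝ * Di) =
      (Di * G.lapMatrix ℝ * Di) * (G.degMatrix ℝ + G.adjMatrix ℝ))
    {u v : V} (huv : G.Adj u v) : G.degree u = G.degree v := by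
  subst hDi
  set s : V → ℝ := fun w => Real.sqrt (G.degree w) with hs
  have h1 : ((G.degMatrix ℝ + G.adjMatrix ℝ) *
      (Matrix.diagonal (fun w => (s w)⁻¹) * G.lapMatrix ℝ * Matrix.diagonal (fun w => (s w)⁻¹))) u v
      = ((Matrix.diagonal (fun w => (s w)⁻¹) * G.lapMatrix ℝ * Matrix.diagonal (fun w => (s w)⁻¹)) *
        (G.degMatrix ℝ + G.adjMatrix ℝ)) u v := by rw [hcomm]
  have hne : u ≠ v := huv.ne
  have collapse : ∀ (a : V) (c : V → ℝ) (p : V → Prop) (_ : DecidablePred p),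
      (∑ x : V, if p x then (if a = x then c x else 0) else 0) = if p a then c a else 0 := by
    intro a c p hp
    rw [Finset.sum_congr rfl (fun x _ => show (if p x then (if a = x then c x else 0) else 0)
      = if a = x then (if p x then c x else 0) else 0 by split_ifs <;> simp_all)]
    rw [Finset.sum_ite_eq]
    simp
  simp only [Matrix.mul_apply, Matrix.mul_diagonal, Matrix.diagonal_mul, Matrix.add_apply,
    Matrix.sub_apply, SimpleGraph.lapMatrix, SimpleGraph.degMatrix, Matrix.diagonal_apply,
    SimpleGraph.adjMatrix_apply, Matrix.of_apply, mul_ite, ite_mul, mul_zero, zero_mul, mul_one,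
    one_mul, sub_mul, mul_sub, add_mul, mul_add, Finset.sum_add_distrib, Finset.sum_sub_distrib,
    Finset.sum_ite_eq, Finset.sum_ite_eq', Finset.mem_univ, if_true, hne, if_false,
    collapse] at h1
  set T : ℝ := ∑ x : V, if G.Adj u x ∧ G.Adj x v then (s x)⁻¹ else 0 with hT
  have esplit : ∀ (A B : V → ℝ), ∀ x : V, (if G.Adj x v then A x + B x else 0)
      = (if G.Adj x v then A x else 0) + (if G.Adj x v then B x else 0) := by
    intro A B x; split_ifs <;> simp
  have esplit2 : ∀ (A B : V → ℝ), ∀ x : V, (if G.Adj x v then A x - B x else 0)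
      = (if G.Adj x v then A x else 0) - (if G.Adj x v then B x else 0) := by
    intro A B x; split_ifs <;> simp
  have hTv : (∑ x : V, if G.Adj x v then (if G.Adj u x then (s x)⁻¹ * (s v)⁻¹ else 0) else 0)
      = T * (s v)⁻¹ := by
    rw [hT, Finset.sum_mul]
    apply Finset.sum_congr rfl
    intro x _
    by_cases h2 : G.Adj u x <;> by_cases h3 : G.Adj x v <;> simp [h2, h3]
  have hTu : (∑ x : V, if G.Adj x v then (if G.Adj u x then (s u)⁻¹ * (s x)⁻¹ else 0) else 0)
      = (s u)⁻¹ * T := by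
    rw [hT, Finset.mul_sum]
    apply Finset.sum_congr rfl
    intro x _
    by_cases h2 : G.Adj u x <;> by_cases h3 : G.Adj x v <;> simp [h2, h3, mul_comm]
  rw [Finset.sum_congr rfl (fun x _ => esplit
        (fun x => if u = x then (G.degree u : ℝ) * ((s x)⁻¹ * (s v)⁻¹) else 0)
        (fun x => if G.Adj u x then (s x)⁻¹ * (s v)⁻¹ else 0) x),
      Finset.sum_congr rfl (fun x _ => esplit2
        (fun x => if u = x then (s u)⁻¹ * (G.degree u : ℝ) * (s u)⁻¹ else 0)
        (fun x => if G.Adj u x then (s u)⁻¹ * (s x)⁻¹ else 0) x),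
      Finset.sum_add_distrib, Finset.sum_sub_distrib, hTv, hTu,
      collapse u _ _ _, collapse u _ _ _] at h1
  simp only [if_pos huv] at h1
  have hx : (0:ℝ) < s u := Real.sqrt_pos.mpr (by exact_mod_cast hdeg u)
  have hy : (0:ℝ) < s v := Real.sqrt_pos.mpr (by exact_mod_cast hdeg v)
  have hTnn : (0:ℝ) ≤ T := by
    rw [hT]
    apply Finset.sum_nonneg
    intro x _
    split_ifs with hx2
    · positivity
    · exact le_refl 0
  have hdu : ((G.degree u : ℝ)) = s u * s u := (Real.mul_self_sqrt (Nat.cast_nonneg _)).symm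
  have hdv : ((G.degree v : ℝ)) = s v * s v := (Real.mul_self_sqrt (Nat.cast_nonneg _)).symm
  rw [hdu, hdv] at h1
  have key : (s v - s u) * (s u + s v + T) = 0 := by
    field_simp at h1
    have hnz : s u * s u * (s v * s v) ≠ 0 := by positivity
    have key3 : ((s v - s u) * (s u + s v + T)) * (s u * s u * (s v * s v)) = 0 := by
      linear_combination (s u * s u * (s v * s v)) * h1
    exact (mul_eq_zero.mp key3).resolve_right hnz
  rcases mul_eq_zero.mp key with h' | h'
  · have hsv : s u = s v := by linarith
    have : ((G.degree u : ℝ)) = ((G.degree v : ℝ)) := by rw [hdu, hdv, hsv]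
    exact_mod_cast this
  · exfalso; nlinarith

end Aux

/-- If `G` is connected with no isolated vertices and `𝓛^r = f(Q)`,
`Q^r = f(𝓛)`, `𝓛^r = f(L)`, or `L^r = f(𝓛)` for some polynomial `f` and
positive integer `r`, then `G` is regular. -/
theorem regular_of_normalized_laplacian_relation
    {V : Type*} [Fintype V] [DecidableEq V]
    (G : SimpleGraph V) [DecidableRel G.Adj] (hconn : G.Connected)
    (hdeg : ∀ v : V, 0 < G.degree v)
    (r : ℕ) (hr : 0 < r) (f : Polynomial ℝ)
    (A D Q L NL : Matrix V V ℝ)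
    (hA : A = G.adjMatrix ℝ)
    (hD : D = Matrix.diagonal fun v => (G.degree v : ℝ))
    (hQ : Q = D + A)
    (hL : L = D - A)
    (hNL : NL = Matrix.diagonal (fun v => (Real.sqrt (G.degree v))⁻¹) * L *
      Matrix.diagonal (fun v => (Real.sqrt (G.degree v))⁻¹))
    (hrel : NL ^ r = Polynomial.aeval Q f ∨
            Q ^ r = Polynomial.aeval NL f ∨
            NL ^ r = Polynomial.aeval L f ∨
            L ^ r = Polynomial.aeval NL f) :
    ∃ d : ℕ, G.IsRegularOfDegree d := by
  classical
  set s : V → ℝ := fun w => Real.sqrt (G.degree w) with hs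
  set Di : Matrix V V ℝ := Matrix.diagonal (fun w => (s w)⁻¹) with hDi
  have hspos : ∀ w, 0 < s w := fun w => Real.sqrt_pos.mpr (by exact_mod_cast hdeg w)
  have hsnz : ∀ w, s w ≠ 0 := fun w => (hspos w).ne'
  have hss : ∀ w, (G.degree w : ℝ) = s w * s w :=
    fun w => (Real.mul_self_sqrt (Nat.cast_nonneg _)).symm
  have hne : Nonempty V := hconn.nonempty
  have hDdeg : D = G.degMatrix ℝ := by rw [hD]; rfl
  have hLlap : L = G.lapMatrix ℝ := by rw [hL, hD]; rw [hA]; rfl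
  have hQdeg : Q = G.degMatrix ℝ + G.adjMatrix ℝ := by rw [hQ, hDdeg, hA]
  have hNL' : NL = Di * G.lapMatrix ℝ * Di := by rw [hNL, hLlap, hDi]
  -- symmetry facts
  have hDiH : Diᴴ = Di := by
    rw [hDi, Matrix.diagonal_conjTranspose]
    congr 1
  have hNLpsd : NL.PosSemidef := by
    have h0 := (SimpleGraph.posSemidef_lapMatrix ℝ G).mul_mul_conjTranspose_same Di
    rw [hDiH] at h0
    rw [hNL']
    exact h0
  have hQpsd : Q.PosSemidef := by rw [hQdeg]; exact posSemidef_signless G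
  have hLpsd : L.PosSemidef := by rw [hLlap]; exact SimpleGraph.posSemidef_lapMatrix ℝ G
  have hNLsymm : NLᵀ = NL := by
    rw [← Matrix.conjTranspose_eq_transpose_of_trivial]; exact hNLpsd.isHermitian
  have hLsymm : Lᵀ = L := by
    rw [← Matrix.conjTranspose_eq_transpose_of_trivial]; exact hLpsd.isHermitian
  -- basic kernel facts
  have hL1 : L *ᵥ (fun _ => (1:ℝ)) = 0 := by
    rw [hLlap]; exact SimpleGraph.lapMatrix_mulVec_const_eq_zero G
  have hDis : Di *ᵥ s = (fun _ => (1:ℝ)) := by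
    funext w
    rw [hDi, Matrix.mulVec_diagonal]
    exact inv_mul_cancel₀ (hsnz w)
  have hNLs : NL *ᵥ s = 0 := by
    rw [hNL', ← Matrix.mulVec_mulVec, ← Matrix.mulVec_mulVec, hDis, ← hLlap, hL1,
      Matrix.mulVec_zero]
  have hsum : (0:ℝ) < ∑ w : V, s w :=
    Finset.sum_pos (fun w _ => hspos w) Finset.univ_nonempty
  -- from everywhere-equal sqrt-degrees to regularity
  have conclude_s : (∀ i j : V, G.Reachable i j → s i = s j) → ∃ d, G.IsRegularOfDegree d := by
    intro hsij
    obtain ⟨v0⟩ := hne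
    refine ⟨G.degree v0, fun v => ?_⟩
    have h1 : s v = s v0 := hsij v v0 (hconn.preconnected v v0)
    have h2 : (G.degree v : ℝ) = (G.degree v0 : ℝ) := by rw [hss, hss, h1]
    exact_mod_cast h2
  -- from edge-equal degrees to regularity
  have conclude_adj : (∀ u v : V, G.Adj u v → G.degree u = G.degree v) →
      ∃ d, G.IsRegularOfDegree d := by
    intro hedge
    obtain ⟨v0⟩ := hne
    refine ⟨G.degree v0, fun v => ?_⟩
    obtain ⟨p⟩ := hconn.preconnected v v0
    clear hrel
    induction p with
    | nil => rfl
    | cons h q ih => exact (hedge _ _ h).trans ih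
  -- commutation consequence used for the Q-cases
  have aeval_comm : ∀ (M : Matrix V V ℝ) (g : Polynomial ℝ),
      M * Polynomial.aeval M g = Polynomial.aeval M g * M := by
    intro M g
    calc M * Polynomial.aeval M g = Polynomial.aeval M X * Polynomial.aeval M g := by
          rw [Polynomial.aeval_X]
      _ = Polynomial.aeval M (X * g) := (_root_.map_mul _ _ _).symm
      _ = Polynomial.aeval M (g * X) := by rw [mul_comm]
      _ = Polynomial.aeval M g * Polynomial.aeval M X := _root_.map_mul _ _ _
      _ = Polynomial.aeval M g * M := by rw [Polynomial.aeval_X]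
  have Qcase : Q * NL = NL * Q → ∃ d, G.IsRegularOfDegree d := by
    intro hcomm
    apply conclude_adj
    intro u v huv
    have hcomm' : (G.degMatrix ℝ + G.adjMatrix ℝ) * (Di * G.lapMatrix ℝ * Di) =
        (Di * G.lapMatrix ℝ * Di) * (G.degMatrix ℝ + G.adjMatrix ℝ) := by
      rw [← hQdeg, ← hNL']; exact hcomm
    exact degree_eq_of_adj_of_commute G hdeg (hDi.trans (by rfl)) hcomm' huv
  rcases hrel with h | h | h | h
  · -- NL ^ r = f(Q)
    apply Qcase
    apply commute_of_commute_pow hNLpsd hr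
    rw [h]
    exact aeval_comm Q f
  · -- Q ^ r = f(NL)
    apply Qcase
    have hcp : NL * Q ^ r = Q ^ r * NL := by rw [h]; exact aeval_comm NL f
    exact (commute_of_commute_pow hQpsd hr hcp).symm
  · -- NL ^ r = f(L)
    have e1 : NL ^ r *ᵥ (fun _ => (1:ℝ)) = f.coeff 0 • (fun _ => (1:ℝ)) := by
      rw [h]; exact aeval_mulVec_of_mulVec_zero hL1 f
    have e2 : NL ^ r *ᵥ s = 0 := pow_mulVec_zero_up hNLs hr
    have e3 : s ⬝ᵥ (NL ^ r *ᵥ (fun _ => (1:ℝ))) = 0 := by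
      rw [Matrix.dotProduct_mulVec, ← Matrix.mulVec_transpose, Matrix.transpose_pow, hNLsymm,
        e2, zero_dotProduct]
    have e4 : f.coeff 0 * (∑ w : V, s w) = 0 := by
      rw [e1] at e3
      rw [dotProduct_smul] at e3
      simpa [dotProduct] using e3
    have hc0 : f.coeff 0 = 0 := by
      rcases mul_eq_zero.mp e4 with h' | h'
      · exact h'
      · exact absurd h' hsum.ne'
    have e5 : NL ^ r *ᵥ (fun _ => (1:ℝ)) = 0 := by rw [e1, hc0, zero_smul]
    obtain ⟨k, rfl⟩ := Nat.exists_eq_succ_of_ne_zero hr.ne'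
    have e6 : NL *ᵥ (fun _ => (1:ℝ)) = 0 := pow_mulVec_zero_down hNLsymm k e5
    have e7 : L *ᵥ (fun w => (s w)⁻¹) = 0 := by
      have e8 : Di *ᵥ (L *ᵥ (fun w => (s w)⁻¹)) = 0 := by
        have : Di *ᵥ (fun _ => (1:ℝ)) = (fun w => (s w)⁻¹) := by
          funext w; rw [hDi, Matrix.mulVec_diagonal, mul_one]
        rw [← this, Matrix.mulVec_mulVec, Matrix.mulVec_mulVec, ← hNL, e6]
      funext w
      have e9 : (Di *ᵥ (L *ᵥ fun w => (s w)⁻¹)) w = 0 := by rw [e8]; rfl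
      rw [hDi, Matrix.mulVec_diagonal] at e9
      have := mul_eq_zero.mp e9
      rcases this with h' | h'
      · exact absurd h' (inv_ne_zero (hsnz w))
      · exact h'
    apply conclude_s
    intro i j hij
    have e10 := (SimpleGraph.lapMatrix_mulVec_eq_zero_iff_forall_reachable (G := G)
      (x := fun w => (s w)⁻¹)).mp (by rw [← hLlap]; exact e7) i j hij
    exact inv_inj.mp e10
  · -- L ^ r = f(NL)
    have e1 : L ^ r *ᵥ s = f.coeff 0 • s := by
      rw [h]; exact aeval_mulVec_of_mulVec_zero hNLs f
    have e3 : (fun _ => (1:ℝ)) ⬝ᵥ (L ^ r *ᵥ s) = 0 := by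
      rw [Matrix.dotProduct_mulVec, ← Matrix.mulVec_transpose, Matrix.transpose_pow, hLsymm,
        pow_mulVec_zero_up hL1 hr, zero_dotProduct]
    have e4 : f.coeff 0 * (∑ w : V, s w) = 0 := by
      rw [e1, dotProduct_smul] at e3
      simpa [dotProduct] using e3
    have hc0 : f.coeff 0 = 0 := by
      rcases mul_eq_zero.mp e4 with h' | h'
      · exact h'
      · exact absurd h' hsum.ne'
    have e5 : L ^ r *ᵥ s = 0 := by rw [e1, hc0, zero_smul]
    obtain ⟨k, rfl⟩ := Nat.exists_eq_succ_of_ne_zero hr.ne'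
    have e6 : L *ᵥ s = 0 := pow_mulVec_zero_down hLsymm k e5
    apply conclude_s
    intro i j hij
    exact (SimpleGraph.lapMatrix_mulVec_eq_zero_iff_forall_reachable (G := G) (x := s)).mp
      (by rw [← hLlap]; exact e6) i j hij
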